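/- Let (ℤⁿ, w), n ≥ 2, be a weighted grid graph and K ⊂ ℤⁿ a finite set such that w({x,y}) = 1 for every edge {x,y} with both endpoints outside K. If R(x) ≥ 0 for all x ∈ ℤⁿ, then w(e) = 1 for every edge e, i.e. (ℤⁿ, w) is the standard grid graph. -/

import Mathlib

open Filter Topology

noncomputable section

namespace PMT

/-- The `i`-th standard unit vector in `ℤⁿ`. -/
def e (n : ℕ) (i : Fin n) : Fin n → ℤ := fun j => if j = i then 1 else 0

/-- The grid graph on `ℤⁿ`: `x ∼ y` iff `‖x − y‖₁ = 1`. -/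
def grid (n : ℕ) : SimpleGraph (Fin n → ℤ) where
  Adj x y := (∑ i, |x i - y i|) = 1
  symm := by
    refine ⟨?_⟩; intro x y h
    have h' : ∀ i ∈ Finset.univ, |y i - x i| = |x i - y i| :=
      fun i _ => abs_sub_comm _ _
    rw [Finset.sum_congr rfl h']
    exact h
  loopless := by refine ⟨?_⟩; intro x h; simp at h

/-- The graph Laplacian `Δf(x) = Σ_{y∼x} w(x,y)(f(y)−f(x))` of an integer-valued function. -/
def lap {V : Type*} (G : SimpleGraph V) (w : V → V → ℝ) (f : V → ℤ) (x : V) : ℝ :=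
  ∑ᶠ y ∈ {y | G.Adj x y}, w x y * ((f y : ℝ) - (f x : ℝ))

/-- `f : V → ℤ` is 1-Lipschitz with respect to the combinatorial graph distance. -/
def Lip1 {V : Type*} (G : SimpleGraph V) (f : V → ℤ) : Prop :=
  ∀ x y, |f x - f y| ≤ (G.dist x y : ℤ)

/-- Ollivier curvature of the pair `(x, y)`:
`κ(x,y) = inf {Δf(x) − Δf(y) | f : V → ℤ, f 1-Lipschitz, f(y) = f(x) + 1}`. -/
def kappa {V : Type*} (G : SimpleGraph V) (w : V → V → ℝ) (x y : V) : ℝ :=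
  sInf {r | ∃ f : V → ℤ, Lip1 G f ∧ f y = f x + 1 ∧ r = lap G w f x - lap G w f y}

/-- Scalar curvature `R(x) = Σ_{y∼x} κ(x,y)`. -/
def scal {V : Type*} (G : SimpleGraph V) (w : V → V → ℝ) (x : V) : ℝ :=
  ∑ᶠ y ∈ {y | G.Adj x y}, kappa G w x y

/-- A weighted grid graph `(ℤⁿ, w)`: symmetric weights, positive on edges. -/
structure GridWeight (n : ℕ) where
  w : (Fin n → ℤ) → (Fin n → ℤ) → ℝ
  symm : ∀ x y, w x y = w y x
  pos : ∀ x y, (grid n).Adj x y → 0 < w x y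

/-- The quantity `Abs(x)` measuring the distortion from the standard grid graph. -/
def Absf (n : ℕ) (w : (Fin n → ℤ) → (Fin n → ℤ) → ℝ) (x : Fin n → ℤ) : ℝ :=
  ∑ i, ∑ j, if i ≠ j then
      (|w x (x + e n i) - w (x + e n j) (x + e n j + e n i)| +
       |w x (x + e n i) - w (x - e n j) (x - e n j + e n i)| +
       |w x (x - e n i) - w (x + e n j) (x + e n j - e n i)| +
       |w x (x - e n i) - w (x - e n j) (x - e n j - e n i)|)
    else 0

/-- The `ℓ^∞` norm `‖x‖_∞` of `x ∈ ℤⁿ`, as a natural number. -/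
def nInf {n : ℕ} (x : Fin n → ℤ) : ℕ := Finset.univ.sup fun i => (x i).natAbs

/-- The cube `Q_r = {y ∈ ℤⁿ : ‖y‖∞ ≤ r}` as a finset. -/
def Qr (n r : ℕ) : Finset (Fin n → ℤ) := Finset.Icc (fun _ => -(r : ℤ)) (fun _ => (r : ℤ))

/-- `Σ_{e ∈ E_r} w(e)`: the sum of weights of edges with exactly one endpoint in `Q_r`
(each such edge is counted once, via its endpoint inside `Q_r`). -/
def ErSum (n : ℕ) (w : (Fin n → ℤ) → (Fin n → ℤ) → ℝ) (r : ℕ) : ℝ :=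
  ∑ x ∈ Qr n r, ∑ i,
    ((if x + e n i ∉ Qr n r then w x (x + e n i) else 0) +
     (if x - e n i ∉ Qr n r then w x (x - e n i) else 0))

/-- `Σ_{τ ∈ Ẽ_r} w(τ)`: the sum of weights of edges joining the sphere `S_{r+1}` to the
sphere `S_{r+2}` (each such edge is counted once, via its endpoint in `S_{r+1}`). -/
def TErSum (n : ℕ) (w : (Fin n → ℤ) → (Fin n → ℤ) → ℝ) (r : ℕ) : ℝ :=
  ∑ x ∈ Qr n (r + 1), if nInf x = r + 1 then
      (∑ i, ((if nInf (x + e n i) = r + 2 then w x (x + e n i) else 0) +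
             (if nInf (x - e n i) = r + 2 then w x (x - e n i) else 0)))
    else 0

/-- The weighted grid graph `(ℤⁿ, w)` is asymptotically flat: there is `p > n` with
`w = 1 + o(1)`, `Abs(x) = O(‖x‖∞^{−p})` and `|R(x)| = O(‖x‖∞^{−p})` as `‖x‖∞ → ∞`. -/
def AsympFlatGrid (n : ℕ) (W : GridWeight n) : Prop :=
  ∃ p : ℝ, (n : ℝ) < p ∧
    (∀ ε : ℝ, 0 < ε → ∃ M : ℕ, ∀ x y, (grid n).Adj x y → M ≤ nInf x → |W.w x y - 1| ≤ ε) ∧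
    (∃ C : ℝ, ∃ M : ℕ, 0 < M ∧ ∀ x, M ≤ nInf x → Absf n W.w x ≤ C * (nInf x : ℝ) ^ (-p)) ∧
    (∃ C : ℝ, ∃ M : ℕ, 0 < M ∧ ∀ x, M ≤ nInf x → |scal (grid n) W.w x| ≤ C * (nInf x : ℝ) ^ (-p))

variable {n : ℕ}

@[simp] lemma e_self (i : Fin n) : e n i i = 1 := by simp [e]

lemma e_apply (i j : Fin n) : e n i j = if j = i then 1 else 0 := rfl

lemma add_e_apply (x : Fin n → ℤ) (i j : Fin n) :
    (x + e n i) j = x j + if j = i then 1 else 0 := rfl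

lemma sub_e_apply (x : Fin n → ℤ) (i j : Fin n) :
    (x - e n i) j = x j - if j = i then 1 else 0 := rfl

lemma adj_add_e (x : Fin n → ℤ) (i : Fin n) : (grid n).Adj x (x + e n i) := by
  show (∑ j, |x j - (x + e n i) j|) = 1
  have : ∀ j ∈ Finset.univ, |x j - (x + e n i) j| = if j = i then 1 else 0 := by
    intro j _
    rw [add_e_apply]
    by_cases h : j = i <;> simp [h]
  rw [Finset.sum_congr rfl this, Finset.sum_ite_eq']
  simp

lemma adj_sub_e (x : Fin n → ℤ) (i : Fin n) : (grid n).Adj x (x - e n i) := by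
  show (∑ j, |x j - (x - e n i) j|) = 1
  have : ∀ j ∈ Finset.univ, |x j - (x - e n i) j| = if j = i then 1 else 0 := by
    intro j _
    rw [sub_e_apply]
    by_cases h : j = i <;> simp [h]
  rw [Finset.sum_congr rfl this, Finset.sum_ite_eq']
  simp

lemma adj_iff {x y : Fin n → ℤ} :
    (grid n).Adj x y ↔ ∃ i, y = x + e n i ∨ y = x - e n i := by
  constructor
  · intro h
    have h1 : (∑ i, |x i - y i|) = 1 := h
    have hne : ∃ i, |x i - y i| ≠ 0 := by
      by_contra hc
      push_neg at hc
      simp only [abs_eq_zero] at hc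
      rw [Finset.sum_congr rfl (fun i _ => abs_eq_zero.mpr (hc i))] at h1
      simp at h1
    obtain ⟨i, hi⟩ := hne
    have hle : |x i - y i| ≤ 1 := by
      have := Finset.single_le_sum (f := fun j => |x j - y j|) (fun j _ => abs_nonneg _)
        (Finset.mem_univ i)
      omega
    have h0 : 0 ≤ |x i - y i| := abs_nonneg _
    have heq1 : |x i - y i| = 1 := by omega
    have hrest : ∀ j, j ≠ i → x j = y j := by
      have hA := Finset.add_sum_erase Finset.univ (fun j => |x j - y j|) (Finset.mem_univ i)
      rw [h1, heq1] at hA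
      have hz : ∑ j ∈ Finset.univ.erase i, |x j - y j| = 0 := by omega
      intro j hj
      have hz2 := (Finset.sum_eq_zero_iff_of_nonneg (fun k _ => abs_nonneg _)).mp hz j
        (Finset.mem_erase.mpr ⟨hj, Finset.mem_univ j⟩)
      simp only [abs_eq_zero, sub_eq_zero] at hz2
      exact hz2
    rcases abs_eq (by norm_num : (0:ℤ) ≤ 1) |>.mp heq1 with hc | hc
    · refine ⟨i, Or.inr ?_⟩
      funext j
      rw [sub_e_apply]
      by_cases hj : j = i
      · subst hj; omega
      · simp [hj, hrest j hj]
    · refine ⟨i, Or.inl ?_⟩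
      funext j
      rw [add_e_apply]
      by_cases hj : j = i
      · subst hj; omega
      · simp [hj, hrest j hj]
  · rintro ⟨i, rfl | rfl⟩
    · exact adj_add_e x i
    · exact adj_sub_e x i

/-- The neighbor finset. -/
def nbr (n : ℕ) (x : Fin n → ℤ) : Finset (Fin n → ℤ) :=
  (Finset.univ.image (fun i => x + e n i)) ∪ (Finset.univ.image (fun i => x - e n i))

lemma add_e_injective (x : Fin n → ℤ) : Function.Injective (fun i => x + e n i) := by
  intro i j hij
  have := congrFun hij i
  simp only [add_e_apply] at this
  by_contra hne
  simp [Ne.symm hne] at this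
  omega

lemma sub_e_injective (x : Fin n → ℤ) : Function.Injective (fun i => x - e n i) := by
  intro i j hij
  have := congrFun hij i
  simp only [sub_e_apply] at this
  by_contra hne
  simp [Ne.symm hne] at this
  omega

lemma add_ne_sub (x : Fin n → ℤ) (i j : Fin n) : x + e n i ≠ x - e n j := by
  intro h
  have := congrFun h i
  simp only [add_e_apply, sub_e_apply] at this
  by_cases hj : i = j <;> simp [hj] at this <;> omega

lemma finsum_adj (x : Fin n → ℤ) (F : (Fin n → ℤ) → ℝ) :
    (∑ᶠ y ∈ {y | (grid n).Adj x y}, F y) =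
      (∑ i, F (x + e n i)) + ∑ i, F (x - e n i) := by
  have hset : {y | (grid n).Adj x y} = ↑(nbr n x) := by
    ext y
    simp only [Set.mem_setOf_eq, adj_iff, nbr, Finset.coe_union, Finset.coe_image,
      Finset.coe_univ, Set.image_univ, Set.mem_union, Set.mem_range]
    constructor
    · rintro ⟨i, h | h⟩
      · exact Or.inl ⟨i, h.symm⟩
      · exact Or.inr ⟨i, h.symm⟩
    · rintro (⟨i, h⟩ | ⟨i, h⟩)
      · exact ⟨i, Or.inl h.symm⟩
      · exact ⟨i, Or.inr h.symm⟩
  rw [hset, finsum_mem_coe_finset, nbr, Finset.sum_union, Finset.sum_image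
    (fun i _ j _ h => add_e_injective x h), Finset.sum_image (fun i _ j _ h => sub_e_injective x h)]
  · rw [Finset.disjoint_left]
    intro a ha hb
    simp only [Finset.mem_image, Finset.mem_univ, true_and] at ha hb
    obtain ⟨i, rfl⟩ := ha
    obtain ⟨j, hj⟩ := hb
    exact add_ne_sub x i j hj.symm

lemma lap_formula (w : (Fin n → ℤ) → (Fin n → ℤ) → ℝ) (f : (Fin n → ℤ) → ℤ) (x : Fin n → ℤ) :
    lap (grid n) w f x =
      (∑ i, w x (x + e n i) * ((f (x + e n i) : ℝ) - (f x : ℝ))) +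
      ∑ i, w x (x - e n i) * ((f (x - e n i) : ℝ) - (f x : ℝ)) :=
  finsum_adj x _


lemma reach_aux : ∀ k : ℕ, ∀ x y : Fin n → ℤ, (∑ i, |x i - y i|) ≤ k → (grid n).Reachable x y := by
  intro k
  induction k with
  | zero =>
    intro x y h
    have hxy : x = y := by
      funext j
      have h0 : ∑ i, |x i - y i| = 0 := le_antisymm (by exact_mod_cast h)
        (Finset.sum_nonneg (fun i _ => abs_nonneg _))
      have := (Finset.sum_eq_zero_iff_of_nonneg (fun i _ => abs_nonneg _)).mp h0 j
        (Finset.mem_univ j)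
      simp only [abs_eq_zero, sub_eq_zero] at this
      exact this
    exact hxy ▸ SimpleGraph.Reachable.refl x
  | succ k ih =>
    intro x y h
    by_cases hxy : x = y
    · exact hxy ▸ SimpleGraph.Reachable.refl x
    · have hne : ∃ i, x i ≠ y i := by
        by_contra hc
        push_neg at hc
        exact hxy (funext hc)
      obtain ⟨i, hi⟩ := hne
      set x' : Fin n → ℤ := if x i < y i then x + e n i else x - e n i with hx'
      have hadj : (grid n).Adj x x' := by
        rw [hx']
        split
        · exact adj_add_e x i
        · exact adj_sub_e x i
      have hstep : ∀ j, |x' j - y j| = |x j - y j| - (if j = i then 1 else 0) := by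
        intro j
        by_cases hj : j = i
        · subst hj
          rw [hx']
          split
          · rename_i hlt
            rw [add_e_apply]
            simp only [if_pos rfl]
            rw [abs_of_nonpos (by omega), abs_of_nonpos (by omega)]
            omega
          · rename_i hlt
            rw [sub_e_apply]
            simp only [if_pos rfl]
            have hyx : y j < x j := by omega
            rw [abs_of_nonneg (by omega), abs_of_nonneg (by omega)]
            omega
        · have : x' j = x j := by
            rw [hx']; split
            · rw [add_e_apply]; simp [hj]
            · rw [sub_e_apply]; simp [hj]
          simp [this, hj]
      have hsum : (∑ j, |x' j - y j|) = (∑ j, |x j - y j|) - 1 := by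
        rw [Finset.sum_congr rfl (fun j _ => hstep j), Finset.sum_sub_distrib,
          Finset.sum_ite_eq']
        simp
      have hle : (∑ j, |x' j - y j|) ≤ k := by
        rw [hsum]
        push_cast at h ⊢
        omega
      exact (hadj.reachable).trans (ih x' y hle)

lemma grid_reachable (x y : Fin n → ℤ) : (grid n).Reachable x y :=
  reach_aux (∑ i, |x i - y i|).toNat x y (Int.self_le_toNat _)

lemma walk_bound (f : (Fin n → ℤ) → ℤ) (hf : ∀ a b, (grid n).Adj a b → |f a - f b| ≤ 1) :
    ∀ {a b : Fin n → ℤ} (p : (grid n).Walk a b), |f a - f b| ≤ (p.length : ℤ) := by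
  intro a b p
  induction p with
  | nil => simp
  | cons h q ih =>
    rename_i u v w'
    have h1 := hf u v h
    have h2 := ih
    have h3 : |f u - f w'| ≤ |f u - f v| + |f v - f w'| := abs_sub_le _ _ _
    simp only [SimpleGraph.Walk.length_cons]
    push_cast
    omega

lemma lip1_of_local (f : (Fin n → ℤ) → ℤ) (hf : ∀ a b, (grid n).Adj a b → |f a - f b| ≤ 1) :
    Lip1 (grid n) f := by
  intro x y
  obtain ⟨p, hp⟩ := (grid_reachable x y).exists_walk_length_eq_dist
  calc |f x - f y| ≤ (p.length : ℤ) := walk_bound f hf p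
  _ = _ := by rw [hp]

lemma lip_adj {f : (Fin n → ℤ) → ℤ} (hf : Lip1 (grid n) f) {a b : Fin n → ℤ}
    (h : (grid n).Adj a b) : |f a - f b| ≤ 1 := by
  have h1 := hf a b
  have h2 : (grid n).dist a b ≤ 1 := by
    have := SimpleGraph.dist_le h.toWalk
    simpa using this
  calc |f a - f b| ≤ ((grid n).dist a b : ℤ) := h1
  _ ≤ 1 := by exact_mod_cast h2


lemma scal_eq (w : (Fin n → ℤ) → (Fin n → ℤ) → ℝ) (x : Fin n → ℤ) :
    scal (grid n) w x =
      (∑ i, kappa (grid n) w x (x + e n i)) + ∑ i, kappa (grid n) w x (x - e n i) :=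
  finsum_adj x _

lemma sum_delta (g : Fin n → ℝ) (i : Fin n) (c : Fin n → ℝ)
    (h : ∀ k, g k = if k = i then c k else 0) : ∑ k, g k = c i := by
  rw [Finset.sum_congr rfl (fun k _ => h k), Finset.sum_ite_eq']
  simp

lemma sub_add_e (x : Fin n → ℤ) (i : Fin n) : x - e n i + e n i = x := by
  funext j; simp

lemma add_sub_e (x : Fin n → ℤ) (i : Fin n) : x + e n i - e n i = x := by
  funext j; simp

lemma lap_bound (w : (Fin n → ℤ) → (Fin n → ℤ) → ℝ) (x : Fin n → ℤ)
    (hpos : ∀ y, (grid n).Adj x y → 0 ≤ w x y) (f : (Fin n → ℤ) → ℤ) (hf : Lip1 (grid n) f) :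
    |lap (grid n) w f x| ≤ (∑ i, w x (x + e n i)) + ∑ i, w x (x - e n i) := by
  rw [lap_formula]
  have key : ∀ (y : Fin n → ℤ), (grid n).Adj x y →
      |w x y * ((f y : ℝ) - (f x : ℝ))| ≤ w x y := by
    intro y hy
    rw [abs_mul, abs_of_nonneg (hpos y hy)]
    have h1 : |f y - f x| ≤ 1 := by
      have := lip_adj hf hy
      rw [abs_sub_comm] at this
      exact this
    have h2 : |(f y : ℝ) - (f x : ℝ)| ≤ 1 := by
      have h3 : ((|f y - f x| : ℤ) : ℝ) ≤ 1 := by exact_mod_cast h1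
      rw [Int.cast_abs, Int.cast_sub] at h3
      exact h3
    nlinarith [hpos y hy, abs_nonneg ((f y : ℝ) - (f x : ℝ))]
  calc |(∑ i, w x (x + e n i) * ((f (x + e n i) : ℝ) - (f x : ℝ))) +
        ∑ i, w x (x - e n i) * ((f (x - e n i) : ℝ) - (f x : ℝ))|
      ≤ |∑ i, w x (x + e n i) * ((f (x + e n i) : ℝ) - (f x : ℝ))| +
        |∑ i, w x (x - e n i) * ((f (x - e n i) : ℝ) - (f x : ℝ))| := abs_add_le _ _
    _ ≤ (∑ i, |w x (x + e n i) * ((f (x + e n i) : ℝ) - (f x : ℝ))|) +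
        ∑ i, |w x (x - e n i) * ((f (x - e n i) : ℝ) - (f x : ℝ))| := by
        gcongr <;> exact Finset.abs_sum_le_sum_abs _ _
    _ ≤ _ := by
        gcongr with i _ i _
        · exact key _ (adj_add_e x i)
        · exact key _ (adj_sub_e x i)

lemma kappa_bddBelow (W : GridWeight n) (x y : Fin n → ℤ) :
    BddBelow {r | ∃ f : (Fin n → ℤ) → ℤ, Lip1 (grid n) f ∧ f y = f x + 1 ∧
      r = lap (grid n) W.w f x - lap (grid n) W.w f y} := by
  refine ⟨-(((∑ i, W.w x (x + e n i)) + ∑ i, W.w x (x - e n i)) +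
      ((∑ i, W.w y (y + e n i)) + ∑ i, W.w y (y - e n i))), ?_⟩
  rintro r ⟨f, hf, hfy, rfl⟩
  have h1 := lap_bound W.w x (fun z hz => (W.pos x z hz).le) f hf
  have h2 := lap_bound W.w y (fun z hz => (W.pos y z hz).le) f hf
  linarith [(abs_le.mp h1).1, (abs_le.mp h1).2, (abs_le.mp h2).1, (abs_le.mp h2).2]

lemma kappa_le (W : GridWeight n) (x y : Fin n → ℤ) (f : (Fin n → ℤ) → ℤ)
    (hf : Lip1 (grid n) f) (hfy : f y = f x + 1) :
    kappa (grid n) W.w x y ≤ lap (grid n) W.w f x - lap (grid n) W.w f y :=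
  csInf_le (kappa_bddBelow W x y) ⟨f, hf, hfy, rfl⟩

lemma lap_coord (w : (Fin n → ℤ) → (Fin n → ℤ) → ℝ) (i : Fin n) (x : Fin n → ℤ) :
    lap (grid n) w (fun z => z i) x = w x (x + e n i) - w x (x - e n i) := by
  rw [lap_formula]
  have c1 : ∀ k ∈ Finset.univ, w x (x + e n k) * ((((x + e n k) i : ℤ) : ℝ) - ((x i : ℤ) : ℝ))
      = if k = i then w x (x + e n k) else 0 := by
    intro k _
    rw [add_e_apply]
    by_cases hk : k = i
    · subst hk; simp
    · simp [Ne.symm hk, hk]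
  have c2 : ∀ k ∈ Finset.univ, w x (x - e n k) * ((((x - e n k) i : ℤ) : ℝ) - ((x i : ℤ) : ℝ))
      = if k = i then -w x (x - e n k) else 0 := by
    intro k _
    rw [sub_e_apply]
    by_cases hk : k = i
    · subst hk; simp
    · simp [Ne.symm hk, hk]
  rw [Finset.sum_congr rfl c1, Finset.sum_congr rfl c2, Finset.sum_ite_eq',
    Finset.sum_ite_eq']
  simp
  ring

lemma lap_coord_neg (w : (Fin n → ℤ) → (Fin n → ℤ) → ℝ) (i : Fin n) (x : Fin n → ℤ) :
    lap (grid n) w (fun z => -z i) x = w x (x - e n i) - w x (x + e n i) := by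
  rw [lap_formula]
  have c1 : ∀ k ∈ Finset.univ, w x (x + e n k) * (((-(x + e n k) i : ℤ) : ℝ) - ((-x i : ℤ) : ℝ))
      = if k = i then -w x (x + e n k) else 0 := by
    intro k _
    rw [add_e_apply]
    by_cases hk : k = i
    · subst hk; simp
    · simp [Ne.symm hk, hk]
  have c2 : ∀ k ∈ Finset.univ, w x (x - e n k) * (((-(x - e n k) i : ℤ) : ℝ) - ((-x i : ℤ) : ℝ))
      = if k = i then w x (x - e n k) else 0 := by
    intro k _
    rw [sub_e_apply]
    by_cases hk : k = i
    · subst hk; simp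
    · simp [Ne.symm hk, hk]
  rw [Finset.sum_congr rfl c1, Finset.sum_congr rfl c2, Finset.sum_ite_eq',
    Finset.sum_ite_eq']
  simp
  ring


/-- `hh W i x = w(x, x+e_i)`. -/
def hh (W : GridWeight n) (i : Fin n) (x : Fin n → ℤ) : ℝ := W.w x (x + e n i)

/-- The upper bound `T_i(x)` for `κ(x, x+e_i)`. -/
def TT (W : GridWeight n) (i : Fin n) (x : Fin n → ℤ) : ℝ :=
  2 * hh W i x - hh W i (x - e n i) - hh W i (x + e n i)

lemma w_sub (W : GridWeight n) (x : Fin n → ℤ) (i : Fin n) :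
    W.w x (x - e n i) = hh W i (x - e n i) := by
  unfold hh
  rw [sub_add_e, W.symm]

lemma adj_coord {a b : Fin n → ℤ} (hab : (grid n).Adj a b) (i : Fin n) :
    |a i - b i| ≤ 1 := by
  have h1 : (∑ k, |a k - b k|) = 1 := hab
  have := Finset.single_le_sum (f := fun k => |a k - b k|) (fun k _ => abs_nonneg _)
    (Finset.mem_univ i)
  omega

lemma adj_two_coord {a b : Fin n → ℤ} (hab : (grid n).Adj a b) {i j : Fin n} (hij : i ≠ j) :
    |a i - b i| + |a j - b j| ≤ 1 := by
  have h1 : (∑ k ∈ ({i, j} : Finset (Fin n)), |a k - b k|) ≤ ∑ k, |a k - b k| :=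
    Finset.sum_le_sum_of_subset_of_nonneg (Finset.subset_univ _) (fun k _ _ => abs_nonneg _)
  rw [Finset.sum_pair hij] at h1
  have h2 : (∑ k, |a k - b k|) = 1 := hab
  omega

lemma coord_lip1 (i : Fin n) : Lip1 (grid n) (fun z => z i) :=
  lip1_of_local _ (fun a b hab => adj_coord hab i)

lemma coord_neg_lip1 (i : Fin n) : Lip1 (grid n) (fun z => -z i) := by
  refine lip1_of_local _ (fun a b hab => ?_)
  have h := adj_coord hab i
  have h2 : -a i - -b i = -(a i - b i) := by ring
  rw [h2, abs_neg]
  exact h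

lemma step_abs (t s u c : ℤ) (hc : |c| ≤ 1) :
    |(if t < s then c else 0) - (if t < u then c else 0)| ≤ |s - u| := by
  split_ifs with h1 h2 h2
  · simpa using abs_nonneg (s - u)
  · have h3 : (1:ℤ) ≤ |s - u| := le_trans (by omega) (le_abs_self _)
    simpa using hc.trans h3
  · have h3 : (1:ℤ) ≤ |s - u| := by
      rw [abs_sub_comm]
      exact le_trans (by omega) (le_abs_self _)
    rw [zero_sub, abs_neg]
    exact hc.trans h3
  · simpa using abs_nonneg (s - u)

lemma lip_coord_step (i j : Fin n) (hij : i ≠ j) (t c : ℤ) (hc : |c| ≤ 1) :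
    Lip1 (grid n) (fun z => z i + (if t < z j then c else 0)) := by
  refine lip1_of_local _ (fun a b hab => ?_)
  have h1 : a i + (if t < a j then c else 0) - (b i + (if t < b j then c else 0))
      = (a i - b i) + ((if t < a j then c else 0) - (if t < b j then c else 0)) := by ring
  rw [h1]
  calc |(a i - b i) + ((if t < a j then c else 0) - (if t < b j then c else 0))|
      ≤ |a i - b i| + |(if t < a j then c else 0) - (if t < b j then c else 0)| := abs_add_le _ _
    _ ≤ |a i - b i| + |a j - b j| := by
        have := step_abs t (a j) (b j) c hc
        omega
    _ ≤ 1 := adj_two_coord hab hij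

lemma lap_add (w : (Fin n → ℤ) → (Fin n → ℤ) → ℝ) (f g : (Fin n → ℤ) → ℤ) (x : Fin n → ℤ) :
    lap (grid n) w (fun z => f z + g z) x = lap (grid n) w f x + lap (grid n) w g x := by
  rw [lap_formula, lap_formula, lap_formula]
  have key : ∀ y : Fin n → ℤ, w x y * (((f y + g y : ℤ) : ℝ) - ((f x + g x : ℤ) : ℝ))
      = w x y * ((f y : ℝ) - (f x : ℝ)) + w x y * ((g y : ℝ) - (g x : ℝ)) := by
    intro y; push_cast; ring
  rw [Finset.sum_congr rfl (fun k _ => key (x + e n k)),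
    Finset.sum_congr rfl (fun k _ => key (x - e n k)),
    Finset.sum_add_distrib, Finset.sum_add_distrib]
  ring

lemma lap_step (w : (Fin n → ℤ) → (Fin n → ℤ) → ℝ) (j : Fin n) (c : ℤ) (t : ℤ)
    (z : Fin n → ℤ) (hz : z j = t) :
    lap (grid n) w (fun v => if t < v j then c else 0) z = w z (z + e n j) * (c : ℝ) := by
  rw [lap_formula]
  have c1 : ∀ k ∈ Finset.univ,
      w z (z + e n k) * ((((if t < (z + e n k) j then c else 0) : ℤ) : ℝ)
        - (((if t < z j then c else 0) : ℤ) : ℝ))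
      = if k = j then w z (z + e n k) * (c:ℝ) else 0 := by
    intro k _
    rw [add_e_apply]
    by_cases hk : k = j
    · subst hk
      simp [hz]
    · have : ¬ (j = k) := Ne.symm hk
      simp [this, hk, hz]
  have c2 : ∀ k ∈ Finset.univ,
      w z (z - e n k) * ((((if t < (z - e n k) j then c else 0) : ℤ) : ℝ)
        - (((if t < z j then c else 0) : ℤ) : ℝ))
      = 0 := by
    intro k _
    rw [sub_e_apply]
    by_cases hk : k = j
    · subst hk
      simp [hz]
    · have : ¬ (j = k) := Ne.symm hk
      simp [this, hz]
  rw [Finset.sum_congr rfl c1, Finset.sum_congr rfl c2, Finset.sum_ite_eq']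
  simp

lemma kappa_le_T (W : GridWeight n) (x : Fin n → ℤ) (i : Fin n) :
    kappa (grid n) W.w x (x + e n i) ≤ TT W i x := by
  have hlip := coord_lip1 (n := n) i
  have hfy : (x + e n i) i = x i + 1 := by rw [add_e_apply]; simp
  have h := kappa_le W x (x + e n i) (fun z => z i) hlip hfy
  rw [lap_coord, lap_coord] at h
  have e1 : W.w x (x - e n i) = hh W i (x - e n i) := w_sub W x i
  have e2 : W.w (x + e n i) ((x + e n i) + e n i) = hh W i (x + e n i) := rfl
  have e3 : W.w (x + e n i) ((x + e n i) - e n i) = hh W i x := by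
    rw [add_sub_e, W.symm]; rfl
  rw [e1, e2, e3] at h
  unfold TT
  have e4 : W.w x (x + e n i) = hh W i x := rfl
  rw [e4] at h
  linarith

lemma kappa_le_T' (W : GridWeight n) (x : Fin n → ℤ) (i : Fin n) :
    kappa (grid n) W.w x (x - e n i) ≤ TT W i (x - e n i) := by
  have hlip := coord_neg_lip1 (n := n) i
  have hfy : -((x - e n i) i) = -(x i) + 1 := by rw [sub_e_apply]; simp; ring
  have h := kappa_le W x (x - e n i) (fun z => -z i) hlip hfy
  rw [lap_coord_neg, lap_coord_neg] at h
  have e1 : W.w x (x - e n i) = hh W i (x - e n i) := w_sub W x i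
  have e2 : W.w (x - e n i) ((x - e n i) + e n i) = hh W i (x - e n i) := rfl
  have e3 : W.w (x - e n i) ((x - e n i) - e n i) = hh W i ((x - e n i) - e n i) :=
    w_sub W _ i
  have e4 : W.w x (x + e n i) = hh W i x := rfl
  rw [e1, e2, e3, e4] at h
  unfold TT
  rw [sub_add_e]
  linarith


lemma mem_Qr {r : ℕ} {x : Fin n → ℤ} :
    x ∈ Qr n r ↔ ∀ j, -(r:ℤ) ≤ x j ∧ x j ≤ r := by
  simp only [Qr, Finset.mem_Icc, Pi.le_def]
  constructor
  · rintro ⟨h1, h2⟩ j; exact ⟨h1 j, h2 j⟩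
  · intro h; exact ⟨fun j => (h j).1, fun j => (h j).2⟩

def embAdd (v : Fin n → ℤ) : (Fin n → ℤ) ↪ (Fin n → ℤ) := ⟨fun x => x + v, add_left_injective v⟩

lemma mem_mapAdd {Q : Finset (Fin n → ℤ)} {v x : Fin n → ℤ} :
    x ∈ Q.map (embAdd v) ↔ x - v ∈ Q := by
  simp only [Finset.mem_map, embAdd, Function.Embedding.coeFn_mk]
  constructor
  · rintro ⟨a, ha, rfl⟩; simpa using ha
  · intro h; exact ⟨x - v, h, by simp⟩

lemma sum_shift_cancel (Q : Finset (Fin n → ℤ)) (H : (Fin n → ℤ) → ℝ) (v : Fin n → ℤ)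
    (h1 : ∀ z ∈ Q, z - v ∉ Q → H z = 1)
    (h2 : ∀ z ∈ Q, z + v ∉ Q → H (z + v) = 1) :
    ∑ x ∈ Q, H x = ∑ x ∈ Q, H (x + v) := by
  classical
  set Q' := Q.map (embAdd v) with hQ'
  have hmap : ∑ x ∈ Q, H (x + v) = ∑ x ∈ Q', H x := (Finset.sum_map Q (embAdd v) H).symm
  have hcard : Q.card = Q'.card := (Finset.card_map _).symm
  have d1 : ∑ x ∈ Q \ Q', H x = ((Q \ Q').card : ℝ) := by
    rw [Finset.sum_congr rfl (fun x hx => ?_), Finset.sum_const, nsmul_eq_mul, mul_one]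
    rw [Finset.mem_sdiff] at hx
    exact h1 x hx.1 (fun hc => hx.2 (mem_mapAdd.mpr hc))
  have d2 : ∑ x ∈ Q' \ Q, H x = ((Q' \ Q).card : ℝ) := by
    rw [Finset.sum_congr rfl (fun x hx => ?_), Finset.sum_const, nsmul_eq_mul, mul_one]
    rw [Finset.mem_sdiff] at hx
    have hxv : x - v ∈ Q := mem_mapAdd.mp hx.1
    have := h2 (x - v) hxv (by simpa using hx.2)
    simpa using this
  have c1 := Finset.card_sdiff_add_card_inter Q Q'
  have c2 := Finset.card_sdiff_add_card_inter Q' Q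
  have cc : (Q \ Q').card = (Q' \ Q).card := by
    rw [Finset.inter_comm] at c2
    omega
  have s1 := Finset.sum_inter_add_sum_sdiff Q Q' H
  have s2 := Finset.sum_inter_add_sum_sdiff Q' Q H
  rw [hmap]
  rw [Finset.inter_comm] at s2
  rw [← s1, ← s2, d1, d2, cc]

lemma left_face {r : ℕ} {x : Fin n → ℤ} {i : Fin n} (hx : x ∈ Qr n r)
    (h : x - e n i ∉ Qr n r) : x i = -(r:ℤ) := by
  rw [mem_Qr] at hx h
  push_neg at h
  obtain ⟨j, hj⟩ := h
  have hxj := hx j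
  rw [sub_e_apply] at hj
  by_cases hji : j = i
  · subst hji
    simp only [if_pos rfl] at hj
    have hxi := hx j
    omega
  · simp only [if_neg hji] at hj
    omega

lemma right_face {r : ℕ} {x : Fin n → ℤ} {i : Fin n} (hx : x ∈ Qr n r)
    (h : x + e n i ∉ Qr n r) : x i = (r:ℤ) := by
  rw [mem_Qr] at hx h
  push_neg at h
  obtain ⟨j, hj⟩ := h
  have hxj := hx j
  rw [add_e_apply] at hj
  by_cases hji : j = i
  · subst hji
    simp only [if_pos rfl] at hj
    omega
  · simp only [if_neg hji] at hj
    omega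


section Main

variable (W : GridWeight n) (K : Set (Fin n → ℤ)) (R₀ : ℕ)

lemma sub2_apply (z : Fin n → ℤ) (i : Fin n) : (z - e n i - e n i) i = z i - 2 := by
  rw [sub_e_apply, sub_e_apply]; simp; ring

lemma sub1_apply (z : Fin n → ℤ) (i : Fin n) : (z - e n i) i = z i - 1 := by
  rw [sub_e_apply]; simp

lemma add1_apply (z : Fin n → ℤ) (i : Fin n) : (z + e n i) i = z i + 1 := by
  rw [add_e_apply]; simp

variable (hKb : ∀ z ∈ K, ∀ j, (z j).natAbs ≤ R₀)
  (hout : ∀ x y, (grid n).Adj x y → x ∉ K → y ∉ K → W.w x y = 1)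

include hKb hout in
lemma hh_one (a : Fin n → ℤ) (i : Fin n) (h1 : R₀ < (a i).natAbs)
    (h2 : R₀ < (a i + 1).natAbs) : hh W i a = 1 := by
  have n1 : a ∉ K := fun hu => by have := hKb a hu i; omega
  have n2 : a + e n i ∉ K := fun hu => by
    have := hKb _ hu i
    rw [add1_apply] at this
    omega
  exact hout a (a + e n i) (adj_add_e a i) n1 n2

include hKb hout in
lemma sum_upper_zero (r : ℕ) (hr : R₀ + 2 ≤ r) :
    ∑ x ∈ Qr n r, ∑ i, (TT W i x + TT W i (x - e n i)) = 0 := by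
  rw [Finset.sum_comm]
  apply Finset.sum_eq_zero
  intro i _
  have key : ∀ x ∈ Qr n r, TT W i x + TT W i (x - e n i)
      = (hh W i x - hh W i (x + e n i)) + (hh W i (x - e n i) - hh W i (x - e n i - e n i)) := by
    intro x _
    unfold TT
    rw [sub_add_e]
    ring
  rw [Finset.sum_congr rfl key, Finset.sum_add_distrib]
  have t1 : ∑ x ∈ Qr n r, (hh W i x - hh W i (x + e n i)) = 0 := by
    rw [Finset.sum_sub_distrib]
    have hs := sum_shift_cancel (Qr n r) (hh W i) (e n i) ?_ ?_
    · rw [← hs]; ring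
    · intro z hz hz'
      have hzi := left_face hz hz'
      exact hh_one W K R₀ hKb hout z i (by omega) (by omega)
    · intro z hz hz'
      have hzi := right_face hz hz'
      refine hh_one W K R₀ hKb hout (z + e n i) i ?_ ?_ <;> rw [add1_apply] <;> omega
  have t2 : ∑ x ∈ Qr n r, (hh W i (x - e n i) - hh W i (x - e n i - e n i)) = 0 := by
    rw [Finset.sum_sub_distrib]
    have hs := sum_shift_cancel (Qr n r) (fun z => hh W i (z - e n i - e n i)) (e n i) ?_ ?_
    · have hrw : ∀ x ∈ Qr n r, hh W i (x + e n i - e n i - e n i) = hh W i (x - e n i) := by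
        intro x _
        rw [add_sub_e]
      rw [Finset.sum_congr rfl hrw] at hs
      rw [← hs]
      ring
    · intro z hz hz'
      have hzi := left_face hz hz'
      refine hh_one W K R₀ hKb hout (z - e n i - e n i) i ?_ ?_ <;> rw [sub2_apply] <;> omega
    · intro z hz hz'
      have hzi := right_face hz hz'
      have hrw : z + e n i - e n i - e n i = z - e n i := by rw [add_sub_e]
      show hh W i (z + e n i - e n i - e n i) = 1
      rw [hrw]
      refine hh_one W K R₀ hKb hout (z - e n i) i ?_ ?_ <;> rw [sub1_apply] <;> omega
  linarith

include hKb hout in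
lemma scal_le_upper (x : Fin n → ℤ) :
    scal (grid n) W.w x ≤ ∑ i, (TT W i x + TT W i (x - e n i)) := by
  rw [scal_eq, Finset.sum_add_distrib]
  exact add_le_add (Finset.sum_le_sum fun i _ => kappa_le_T W x i)
    (Finset.sum_le_sum fun i _ => kappa_le_T' W x i)

include hKb hout in
lemma key_equalities (hR : ∀ x, 0 ≤ scal (grid n) W.w x) (x₀ : Fin n → ℤ) :
    scal (grid n) W.w x₀ = ∑ i, (TT W i x₀ + TT W i (x₀ - e n i)) ∧
    (∑ i, (TT W i x₀ + TT W i (x₀ - e n i))) = 0 := by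
  set r := R₀ + 2 + nInf x₀ with hrdef
  have hx₀ : x₀ ∈ Qr n r := by
    rw [mem_Qr]
    intro j
    have := Finset.le_sup (f := fun i => (x₀ i).natAbs) (Finset.mem_univ j)
    have h2 : (x₀ j).natAbs ≤ nInf x₀ := this
    omega
  have hsum0 : ∑ x ∈ Qr n r, ∑ i, (TT W i x + TT W i (x - e n i)) = 0 :=
    sum_upper_zero W K R₀ hKb hout r (by omega)
  have hle : ∀ x ∈ Qr n r, scal (grid n) W.w x ≤ ∑ i, (TT W i x + TT W i (x - e n i)) :=
    fun x _ => scal_le_upper W K R₀ hKb hout x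
  have hge : (0:ℝ) ≤ ∑ x ∈ Qr n r, scal (grid n) W.w x :=
    Finset.sum_nonneg fun x _ => hR x
  have hsc0 : ∑ x ∈ Qr n r, scal (grid n) W.w x = 0 := by
    have := Finset.sum_le_sum hle
    rw [hsum0] at this
    linarith
  have heq := (Finset.sum_eq_sum_iff_of_le hle).mp (by rw [hsc0, hsum0]) x₀ hx₀
  have hz := (Finset.sum_eq_zero_iff_of_nonneg (fun x _ => hR x)).mp hsc0 x₀ hx₀
  exact ⟨heq, by rw [← heq, hz]⟩

include hKb hout in
lemma kappa_eq_T (hR : ∀ x, 0 ≤ scal (grid n) W.w x) (x : Fin n → ℤ) (i : Fin n) :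
    kappa (grid n) W.w x (x + e n i) = TT W i x := by
  have h1 := (key_equalities W K R₀ hKb hout hR x).1
  rw [scal_eq, ← Finset.sum_add_distrib] at h1
  have hterm := (Finset.sum_eq_sum_iff_of_le (fun i _ =>
    add_le_add (kappa_le_T W x i) (kappa_le_T' W x i))).mp h1 i (Finset.mem_univ i)
  have h2 := kappa_le_T W x i
  have h3 := kappa_le_T' W x i
  linarith

include hKb hout in
lemma upper_zero (hR : ∀ x, 0 ≤ scal (grid n) W.w x) (x : Fin n → ℤ) :
    (∑ i, (TT W i x + TT W i (x - e n i))) = 0 :=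
  (key_equalities W K R₀ hKb hout hR x).2


include hKb in
lemma notinK (u : Fin n → ℤ) (i : Fin n) (h : R₀ < (u i).natAbs) : u ∉ K :=
  fun hu => by have := hKb u hu i; omega

include hKb hout in
lemma hh_invariant (hR : ∀ x, 0 ≤ scal (grid n) W.w x) (x : Fin n → ℤ) (i j : Fin n)
    (hij : i ≠ j) : hh W j (x + e n i) = hh W j x := by
  have hkT := kappa_eq_T W K R₀ hKb hout hR x i
  have hxj : (x + e n i) j = x j := by
    rw [add_e_apply]
    simp [hij.symm]
  have main : ∀ c : ℤ, |c| ≤ 1 →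
      kappa (grid n) W.w x (x + e n i) ≤ TT W i x + (hh W j x - hh W j (x + e n i)) * c := by
    intro c hc
    set g1 : (Fin n → ℤ) → ℤ := fun z => if x j < z j then c else 0 with hg1
    set f1 : (Fin n → ℤ) → ℤ := fun z => z i + g1 z with hf1
    have hlip1 : Lip1 (grid n) f1 := lip_coord_step i j hij (x j) c hc
    have hfy1 : f1 (x + e n i) = f1 x + 1 := by
      simp only [hf1, hg1, hxj, add1_apply]
      ring
    have h := kappa_le W x (x + e n i) f1 hlip1 hfy1
    have lx : lap (grid n) W.w f1 x
        = lap (grid n) W.w (fun z => z i) x + lap (grid n) W.w g1 x :=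
      lap_add W.w (fun z => z i) g1 x
    have ly : lap (grid n) W.w f1 (x + e n i)
        = lap (grid n) W.w (fun z => z i) (x + e n i) + lap (grid n) W.w g1 (x + e n i) :=
      lap_add W.w (fun z => z i) g1 (x + e n i)
    have lsx : lap (grid n) W.w g1 x = W.w x (x + e n j) * (c:ℝ) :=
      lap_step W.w j c (x j) x rfl
    have lsy : lap (grid n) W.w g1 (x + e n i) = W.w (x + e n i) ((x + e n i) + e n j) * (c:ℝ) :=
      lap_step W.w j c (x j) (x + e n i) hxj
    rw [lx, ly, lsx, lsy, lap_coord, lap_coord] at h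
    have e1 : W.w x (x - e n i) = hh W i (x - e n i) := w_sub W x i
    have e2 : W.w (x + e n i) ((x + e n i) + e n i) = hh W i (x + e n i) := rfl
    have e3 : W.w (x + e n i) ((x + e n i) - e n i) = hh W i x := by
      rw [add_sub_e, W.symm]; rfl
    have e4 : W.w x (x + e n i) = hh W i x := rfl
    have e5 : W.w x (x + e n j) = hh W j x := rfl
    have e6 : W.w (x + e n i) ((x + e n i) + e n j) = hh W j (x + e n i) := rfl
    rw [e1, e2, e3, e4, e5, e6] at h
    unfold TT
    linarith
  have h1 := main 1 (by norm_num)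
  have h2 := main (-1) (by norm_num)
  rw [hkT] at h1 h2
  push_cast at h1 h2
  linarith

include hKb hout in
lemma hh_iter (hR : ∀ x, 0 ≤ scal (grid n) W.w x) (i j : Fin n) (hij : i ≠ j) :
    ∀ (m : ℕ) (x : Fin n → ℤ), hh W j (x + m • e n i) = hh W j x := by
  intro m
  induction m with
  | zero => intro x; simp
  | succ m ih =>
    intro x
    have hsplit : x + (m+1) • e n i = (x + m • e n i) + e n i := by
      rw [succ_nsmul, ← add_assoc]
    rw [hsplit, hh_invariant W K R₀ hKb hout hR _ i j hij, ih]

lemma smul_e_apply (m : ℕ) (i k : Fin n) : (m • e n i) k = if k = i then (m:ℤ) else 0 := by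
  rw [Pi.smul_apply, e_apply]
  split_ifs <;> simp

include hKb hout in
lemma hh_eq_one_big (hR : ∀ x, 0 ≤ scal (grid n) W.w x) (hn : 1 < n) (j : Fin n)
    (z : Fin n → ℤ) : hh W j z = 1 := by
  set i : Fin n := if h : (j : ℕ) = 0 then ⟨1, hn⟩ else ⟨0, by omega⟩ with hi
  have hij : i ≠ j := by
    rw [hi]
    split_ifs with h
    · intro hc; rw [← hc] at h; simp at h
    · intro hc; rw [← hc] at h; simp at h
  set m : ℕ := R₀ + 1 + (z i).natAbs with hm
  have hzi : (z + m • e n i) i = z i + (m:ℤ) := by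
    rw [Pi.add_apply, smul_e_apply]
    simp
  have hzi' : (z + m • e n i + e n j) i = z i + (m:ℤ) := by
    rw [Pi.add_apply, hzi, e_apply, if_neg hij]
    ring
  have key : hh W j (z + m • e n i) = 1 := by
    refine hout _ _ (adj_add_e _ j) ?_ ?_
    · exact notinK K R₀ hKb _ i (by rw [hzi]; omega)
    · exact notinK K R₀ hKb _ i (by rw [hzi']; omega)
  rw [← hh_iter W K R₀ hKb hout hR i j hij m z, key]

include hKb hout in
lemma hh_eq_one_dim1 (hR : ∀ x, 0 ≤ scal (grid n) W.w x) (hn : n = 1) (j : Fin n)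
    (z : Fin n → ℤ) : hh W j z = 1 := by
  subst hn
  have hj : j = 0 := Subsingleton.elim _ _
  subst hj
  have hup : ∀ x : Fin 1 → ℤ, hh W 0 (x + e 1 0) + hh W 0 (x - e 1 0 - e 1 0)
      = hh W 0 x + hh W 0 (x - e 1 0) := by
    intro x
    have h0 := upper_zero W K R₀ hKb hout hR x
    rw [Fin.sum_univ_one] at h0
    unfold TT at h0
    rw [sub_add_e] at h0
    linarith
  -- V x := hh W 0 x - hh W 0 (x - 2e) satisfies V (x+e) = V x
  set V : (Fin 1 → ℤ) → ℝ := fun x => hh W 0 x - hh W 0 (x - e 1 0 - e 1 0) with hV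
  have hstep : ∀ x, V (x + e 1 0) = V x := by
    intro x
    have := hup x
    have hrw : x + e 1 0 - e 1 0 - e 1 0 = x - e 1 0 := by rw [add_sub_e]
    simp only [hV, hrw]
    linarith
  have hiter : ∀ (m : ℕ) (x : Fin 1 → ℤ), V (x + m • e 1 0) = V x := by
    intro m
    induction m with
    | zero => intro x; simp
    | succ m ih =>
      intro x
      have hsplit : x + (m+1) • e 1 0 = (x + m • e 1 0) + e 1 0 := by
        rw [succ_nsmul, ← add_assoc]
      rw [hsplit, hstep, ih]
  have hVzero : ∀ x, V x = 0 := by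
    intro x
    set m : ℕ := R₀ + 3 + (x 0).natAbs with hm
    have hx0 : (x + m • e 1 0) 0 = x 0 + (m:ℤ) := by
      rw [Pi.add_apply, smul_e_apply]; simp
    have hx2 : (x + m • e 1 0 - e 1 0 - e 1 0) 0 = x 0 + (m:ℤ) - 2 := by
      rw [sub2_apply, hx0]
    have h1 : hh W 0 (x + m • e 1 0) = 1 := by
      refine hh_one W K R₀ hKb hout _ 0 ?_ ?_ <;> rw [hx0] <;> omega
    have h2 : hh W 0 (x + m • e 1 0 - e 1 0 - e 1 0) = 1 := by
      refine hh_one W K R₀ hKb hout _ 0 ?_ ?_ <;> rw [hx2] <;> omega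
    have := hiter m x
    simp only [hV] at this ⊢
    rw [h1, h2] at this
    linarith
  -- hh (z + 2e) = hh z
  have h2step : ∀ x : Fin 1 → ℤ, hh W 0 (x + e 1 0 + e 1 0) = hh W 0 x := by
    intro x
    have := hVzero (x + e 1 0 + e 1 0)
    have hrw : x + e 1 0 + e 1 0 - e 1 0 - e 1 0 = x := by rw [add_sub_e, add_sub_e]
    simp only [hV, hrw] at this
    linarith
  have h2iter : ∀ (m : ℕ) (x : Fin 1 → ℤ), hh W 0 (x + m • (e 1 0 + e 1 0)) = hh W 0 x := by
    intro m
    induction m with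
    | zero => intro x; simp
    | succ m ih =>
      intro x
      have hsplit : x + (m+1) • (e 1 0 + e 1 0) = (x + m • (e 1 0 + e 1 0)) + e 1 0 + e 1 0 := by
        rw [succ_nsmul, ← add_assoc, ← add_assoc]
      rw [hsplit, h2step, ih]
  set m : ℕ := R₀ + 1 + (z 0).natAbs with hm
  have hz0 : (z + m • (e 1 0 + e 1 0)) 0 = z 0 + 2 * (m:ℤ) := by
    rw [Pi.add_apply, Pi.smul_apply, Pi.add_apply, e_self]
    simp
    ring
  have h1 : hh W 0 (z + m • (e 1 0 + e 1 0)) = 1 := by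
    refine hh_one W K R₀ hKb hout _ 0 ?_ ?_ <;> rw [hz0] <;> omega
  rw [← h2iter m z, h1]

end Main

theorem grid_trivial_outside_finite' (n : ℕ) (W : GridWeight n) (K : Set (Fin n → ℤ))
    (hK : K.Finite)
    (hout : ∀ x y, (grid n).Adj x y → x ∉ K → y ∉ K → W.w x y = 1)
    (hR : ∀ x, 0 ≤ scal (grid n) W.w x) :
    ∀ x y, (grid n).Adj x y → W.w x y = 1 := by
  classical
  intro x y hxy
  set R₀ : ℕ := hK.toFinset.sup nInf with hR₀
  have hKb : ∀ z ∈ K, ∀ j, (z j).natAbs ≤ R₀ := by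
    intro z hz j
    have h1 : nInf z ≤ R₀ := Finset.le_sup (hK.mem_toFinset.mpr hz)
    have h2 : (z j).natAbs ≤ nInf z :=
      Finset.le_sup (f := fun i => (z i).natAbs) (Finset.mem_univ j)
    omega
  have hone : ∀ (j : Fin n) (z : Fin n → ℤ), hh W j z = 1 := by
    intro j z
    have hn : 0 < n := j.pos
    rcases Nat.lt_or_ge 1 n with h | h
    · exact hh_eq_one_big W K R₀ hKb hout hR h j z
    · exact hh_eq_one_dim1 W K R₀ hKb hout hR (by omega) j z
  rcases adj_iff.mp hxy with ⟨i, rfl | rfl⟩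
  · exact hone i x
  · rw [w_sub]
    exact hone i (x - e n i)

/-- a weighted grid graph with trivial weights outside a finite set and
nonnegative scalar curvature is the standard grid graph. -/
theorem grid_trivial_outside_finite (n : ℕ) (W : GridWeight n) (K : Set (Fin n → ℤ))
    (hK : K.Finite)
    (hout : ∀ x y, (grid n).Adj x y → x ∉ K → y ∉ K → W.w x y = 1)
    (hR : ∀ x, 0 ≤ scal (grid n) W.w x) :
    ∀ x y, (grid n).Adj x y → W.w x y = 1 :=
  grid_trivial_outside_finite' n W K hK hout hR


end PMT
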